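/- (Donsker–Varadhan variational formula, finite form) For any probability distributions p, q on a finite set X with q absolutely continuous with respect to p, D_KL(q‖p) = sup over all functions φ : X → ℝ of [E_q[φ(X)] − ln E_p[e^{φ(X)}]], and the supremum is attained at φ*(x) = ln(q(x)/p(x)). -/

import Mathlib

open Filter Topology

section aux
variable {X : Type*} [Fintype X] [Nonempty X]

/-- Gibbs inequality part. -/
lemma dv_upper (p q : X → ℝ)
    (hp0 : ∀ x, 0 ≤ p x) (hp1 : ∑ x, p x = 1)
    (hq0 : ∀ x, 0 ≤ q x) (hq1 : ∑ x, q x = 1)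
    (hac : ∀ x, p x = 0 → q x = 0) (φ : X → ℝ) :
    (∑ x, q x * φ x) - Real.log (∑ x, p x * Real.exp (φ x)) ≤
      ∑ x, q x * Real.log (q x / p x) := by
  set Z := ∑ x, p x * Real.exp (φ x) with hZ
  have hZpos : 0 < Z := by
    have hx : ∃ x : X, 0 < p x := by
      by_contra h
      push_neg at h
      have : ∀ x : X, p x = 0 := fun x => le_antisymm (h x) (hp0 x)
      simp [this] at hp1
    obtain ⟨x0, hx0⟩ := hx
    apply Finset.sum_pos' (fun x _ => mul_nonneg (hp0 x) (Real.exp_pos _).le)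
    exact ⟨x0, Finset.mem_univ _, mul_pos hx0 (Real.exp_pos _)⟩
  have key : ∀ x, q x * (φ x - Real.log (q x / p x) - Real.log Z) ≤
      p x * Real.exp (φ x) / Z - q x := by
    intro x
    rcases eq_or_lt_of_le (hq0 x) with h | h
    · rw [← h]
      simpa using div_nonneg (mul_nonneg (hp0 x) (Real.exp_pos _).le) hZpos.le
    · have hpx : 0 < p x := by
        rcases eq_or_lt_of_le (hp0 x) with h' | h'
        · exact absurd (hac x h'.symm) (ne_of_gt h)
        · exact h'
      set t := p x * Real.exp (φ x) / (q x * Z) with ht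
      have htpos : 0 < t := by positivity
      have hlog : Real.log t ≤ t - 1 := Real.log_le_sub_one_of_pos htpos
      have hlt : φ x - Real.log (q x / p x) - Real.log Z = Real.log t := by
        rw [ht]
        rw [Real.log_div (by positivity) (by positivity : (q x * Z) ≠ 0),
          Real.log_mul (ne_of_gt hpx) (Real.exp_ne_zero _),
          Real.log_mul (ne_of_gt h) (ne_of_gt hZpos), Real.log_exp,
          Real.log_div (ne_of_gt h) (ne_of_gt hpx)]
        ring
      rw [hlt]
      calc q x * Real.log t ≤ q x * (t - 1) :=
            mul_le_mul_of_nonneg_left hlog h.le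
        _ = p x * Real.exp (φ x) / Z - q x := by
            field_simp [ht]
            have e : q x * t * Z = p x * Real.exp (φ x) := by
              rw [ht]; field_simp [ne_of_gt h, ne_of_gt hZpos]
            linarith
  have hsum : ∑ x, q x * (φ x - Real.log (q x / p x) - Real.log Z) ≤ 0 := by
    calc ∑ x, q x * (φ x - Real.log (q x / p x) - Real.log Z)
        ≤ ∑ x, (p x * Real.exp (φ x) / Z - q x) := Finset.sum_le_sum fun x _ => key x
      _ = (∑ x, p x * Real.exp (φ x)) / Z - ∑ x, q x := by
          rw [Finset.sum_sub_distrib, ← Finset.sum_div]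
      _ = 0 := by rw [← hZ, div_self (ne_of_gt hZpos), hq1]; ring
  have hexp : ∑ x, q x * (φ x - Real.log (q x / p x) - Real.log Z) =
      (∑ x, q x * φ x) - (∑ x, q x * Real.log (q x / p x)) - Real.log Z := by
    simp only [mul_sub]
    rw [Finset.sum_sub_distrib, Finset.sum_sub_distrib, ← Finset.sum_mul, hq1, one_mul]
  linarith [hsum, hexp ▸ hsum]

end aux

theorem statement7 {X : Type*} [Fintype X] [Nonempty X]
    (p q : X → ℝ)
    (hp0 : ∀ x, 0 ≤ p x) (hp1 : ∑ x, p x = 1)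
    (hq0 : ∀ x, 0 ≤ q x) (hq1 : ∑ x, q x = 1)
    (hac : ∀ x, p x = 0 → q x = 0) :
    (∑ x, q x * Real.log (q x / p x)) =
      (⨆ φ : X → ℝ, ((∑ x, q x * φ x) - Real.log (∑ x, p x * Real.exp (φ x)))) ∧
    (∑ x, q x * Real.log (q x / p x)) - Real.log (∑ x, p x * (q x / p x)) =
      ∑ x, q x * Real.log (q x / p x) := by
  set KL := ∑ x, q x * Real.log (q x / p x) with hKL
  constructor
  · set f : (X → ℝ) → ℝ := fun φ =>
      (∑ x, q x * φ x) - Real.log (∑ x, p x * Real.exp (φ x)) with hf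
    have hub : ∀ φ, f φ ≤ KL := fun φ => dv_upper p q hp0 hp1 hq0 hq1 hac φ
    have hbdd : BddAbove (Set.range f) := ⟨KL, by rintro y ⟨φ, rfl⟩; exact hub φ⟩
    apply le_antisymm
    · -- KL ≤ sup
      apply le_of_forall_pos_le_add
      intro ε hε
      set φ : X → ℝ := fun x => if 0 < q x then Real.log (q x / p x) else Real.log ε with hφ
      have hval : KL - ε ≤ f φ := by
        have hsq : ∑ x, q x * φ x = KL := by
          rw [hKL]
          apply Finset.sum_congr rfl
          intro x _
          rcases eq_or_lt_of_le (hq0 x) with h | h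
          · rw [← h]; ring
          · simp [hφ, h]
        have hZle : ∑ x, p x * Real.exp (φ x) ≤ 1 + ε := by
          calc ∑ x, p x * Real.exp (φ x) ≤ ∑ x, (q x + ε * p x) := by
                apply Finset.sum_le_sum
                intro x _
                rcases eq_or_lt_of_le (hq0 x) with h | h
                · have : φ x = Real.log ε := by simp [hφ, ← h]
                  rw [this, Real.exp_log hε]
                  nlinarith [hp0 x]
                · have hpx : 0 < p x := by
                    rcases eq_or_lt_of_le (hp0 x) with h' | h'
                    · exact absurd (hac x h'.symm) (ne_of_gt h)
                    · exact h'
                  have : φ x = Real.log (q x / p x) := by simp [hφ, h]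
                  rw [this, Real.exp_log (by positivity)]
                  rw [mul_div_cancel₀ _ (ne_of_gt hpx)]
                  nlinarith [hp0 x]
            _ = 1 + ε := by
                rw [Finset.sum_add_distrib, hq1, ← Finset.mul_sum, hp1]; ring
        have hZpos : 0 < ∑ x, p x * Real.exp (φ x) := by
          have hx : ∃ x : X, 0 < p x := by
            by_contra h
            push_neg at h
            have : ∀ x : X, p x = 0 := fun x => le_antisymm (h x) (hp0 x)
            simp [this] at hp1
          obtain ⟨x0, hx0⟩ := hx
          apply Finset.sum_pos' (fun x _ => mul_nonneg (hp0 x) (Real.exp_pos _).le)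
          exact ⟨x0, Finset.mem_univ _, mul_pos hx0 (Real.exp_pos _)⟩
        have hlogZ : Real.log (∑ x, p x * Real.exp (φ x)) ≤ ε := by
          calc Real.log (∑ x, p x * Real.exp (φ x)) ≤ Real.log (1 + ε) :=
                Real.log_le_log hZpos hZle
            _ ≤ (1 + ε) - 1 := Real.log_le_sub_one_of_pos (by linarith)
            _ = ε := by ring
        simp only [hf, hsq]
        linarith
      calc KL ≤ f φ + ε := by linarith
        _ ≤ (⨆ φ : X → ℝ, f φ) + ε := by
            have := le_ciSup hbdd φ
            linarith
    · exact ciSup_le hub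
  · have : ∑ x, p x * (q x / p x) = 1 := by
      rw [← hq1]
      apply Finset.sum_congr rfl
      intro x _
      rcases eq_or_lt_of_le (hp0 x) with h | h
      · rw [← h, hac x h.symm]; ring
      · field_simp
    rw [this, Real.log_one, sub_zero]
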